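/- Let A₁,…,Aₙ be finite-outcome observables with outcome sets Ω₁,…,Ωₙ, and suppose there is an observable C with Aℓ ⪯ C for every ℓ, witnessed by Markov kernels pℓ with Aℓ(x) = ∑_y pℓ(x,y) C(y). Define p((x₁,…,xₙ), y) := ∏_{ℓ=1}^n pℓ(xℓ, y) and G := p ∗ C. Then p is a Markov kernel from the outcome set of C to Ω₁×⋯×Ωₙ, G is a joint observable of A₁,…,Aₙ (i.e. the ℓ-th marginal of G equals Aℓ for each ℓ), and G ⪯ C. -/

import Mathlib

noncomputable section

open scoped BigOperators

variable {H : Type*} [NormedAddCommGroup H] [InnerProductSpace ℂ H] [CompleteSpace H]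

/-- A Markov kernel from `Ω₂` to `Ω₁`: nonnegative entries, columns summing to 1. -/
def IsMarkov {Ω₁ Ω₂ : Type*} [Fintype Ω₁] (p : Ω₁ → Ω₂ → ℝ) : Prop :=
  (∀ x y, 0 ≤ p x y) ∧ ∀ y, ∑ x, p x y = 1

/-- A finite-outcome observable (POVM): positive operators summing to the identity. -/
def IsObservable {Ω : Type*} [Fintype Ω] (A : Ω → H →L[ℂ] H) : Prop :=
  (∀ x, (A x).IsPositive) ∧ ∑ x, A x = 1

/-- Post-processing of `A` by the kernel `p`. -/
def pproc {Ω₁ Ω₂ : Type*} [Fintype Ω₂] (p : Ω₁ → Ω₂ → ℝ) (A : Ω₂ → H →L[ℂ] H) :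
    Ω₁ → H →L[ℂ] H := fun x => ∑ y, (p x y : ℂ) • A y

/-- `A ⪯ B` : `A` is a post-processing of `B`. -/
def PP {Ω₁ Ω₂ : Type*} [Fintype Ω₁] [Fintype Ω₂] (A : Ω₁ → H →L[ℂ] H)
    (B : Ω₂ → H →L[ℂ] H) : Prop := ∃ p, IsMarkov p ∧ A = pproc p B

/-- `G` is a joint observable of the observables `A ℓ`. -/
def IsJoint {n : ℕ} {Ω : Fin n → Type*} [∀ ℓ, Fintype (Ω ℓ)] [∀ ℓ, DecidableEq (Ω ℓ)]
    (A : ∀ ℓ, Ω ℓ → H →L[ℂ] H) (G : (∀ ℓ, Ω ℓ) → H →L[ℂ] H) : Prop :=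
  IsObservable G ∧ ∀ ℓ xℓ, (∑ x : ∀ ℓ, Ω ℓ, if x ℓ = xℓ then G x else 0) = A ℓ xℓ

lemma smul_isPositive {T : H →L[ℂ] H} (hT : T.IsPositive) {r : ℝ} (hr : 0 ≤ r) :
    ((r : ℂ) • T).IsPositive := by
  have hsa : IsSelfAdjoint ((r : ℂ) • T) := by
    rw [IsSelfAdjoint, star_smul, hT.isSelfAdjoint, Complex.star_def, Complex.conj_ofReal]
  refine ContinuousLinearMap.isPositive_def'.2 ⟨hsa, fun x => ?_⟩
  rw [ContinuousLinearMap.reApplyInnerSelf, ContinuousLinearMap.smul_apply, inner_smul_left]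
  have h2 := hT.2 x
  simp only [ContinuousLinearMap.reApplyInnerSelf, RCLike.re_to_complex] at h2
  simp only [Complex.conj_ofReal, RCLike.re_to_complex, Complex.mul_re,
    Complex.ofReal_re, Complex.ofReal_im, zero_mul, sub_zero]
  exact mul_nonneg hr h2

lemma sum_isPositive {ι : Type*} (s : Finset ι) (f : ι → H →L[ℂ] H)
    (h : ∀ i ∈ s, (f i).IsPositive) : (∑ i ∈ s, f i).IsPositive := by
  classical
  induction s using Finset.induction_on with
  | empty => simpa using ContinuousLinearMap.isPositive_zero
  | insert _ _ hi ih =>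
    rw [Finset.sum_insert hi]
    exact (h _ (Finset.mem_insert_self _ _)).add
      (ih fun i hi' => h i (Finset.mem_insert_of_mem hi'))

/-- Observables are stable under post-processing by a Markov kernel. -/
lemma pproc_isObservable {Ω₁ Ω₂ : Type*} [Fintype Ω₁] [Fintype Ω₂]
    {p : Ω₁ → Ω₂ → ℝ} (hp : IsMarkov p) {A : Ω₂ → H →L[ℂ] H} (hA : IsObservable A) :
    IsObservable (pproc p A) := by
  constructor
  · intro x
    exact sum_isPositive _ _ fun y _ => smul_isPositive (hA.1 y) (hp.1 x y)
  · rw [show (∑ x, pproc p A x) = ∑ y, (∑ x, (p x y : ℂ)) • A y by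
      simp only [pproc]
      rw [Finset.sum_comm]
      exact Finset.sum_congr rfl fun y _ => (Finset.sum_smul).symm]
    have : ∀ y : Ω₂, (∑ x, (p x y : ℂ)) = 1 := by
      intro y
      rw [← Complex.ofReal_sum, hp.2 y, Complex.ofReal_one]
    simp only [this, one_smul]
    exact hA.2

/-- Summing the product kernel over all coordinates but the `ℓ`-th gives back `q ℓ`. -/
lemma prod_kernel_marginal {n : ℕ} {Ω : Fin n → Type*}
    [∀ ℓ, Fintype (Ω ℓ)] [∀ ℓ, DecidableEq (Ω ℓ)] {Ω' : Type*}
    (q : ∀ ℓ, Ω ℓ → Ω' → ℝ) (hq : ∀ ℓ, IsMarkov (q ℓ))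
    (ℓ : Fin n) (xℓ : Ω ℓ) (y : Ω') :
    (∑ x : ∀ m, Ω m, if x ℓ = xℓ then ∏ m, q m (x m) y else 0) = q ℓ xℓ y := by
  classical
  set g : ∀ m, Ω m → ℝ := fun m z =>
    if h : m = ℓ then (if z = h.symm ▸ xℓ then q m z y else 0) else q m z y with hg
  have step1 : ∀ x : ∀ m, Ω m,
      (if x ℓ = xℓ then ∏ m, q m (x m) y else 0) = ∏ m, g m (x m) := by
    intro x
    by_cases hx : x ℓ = xℓ
    · rw [if_pos hx]
      refine Finset.prod_congr rfl fun m _ => ?_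
      by_cases h : m = ℓ
      · subst h; simp [hg, hx]
      · simp [hg, h]
    · rw [if_neg hx]
      refine (Finset.prod_eq_zero (Finset.mem_univ ℓ) ?_).symm
      simp [hg, hx]
  rw [Finset.sum_congr rfl fun x _ => step1 x]
  have step2 : (∑ x : ∀ m, Ω m, ∏ m, g m (x m)) = ∏ m, ∑ z : Ω m, g m z := by
    rw [Finset.prod_univ_sum]
    rw [← Fintype.piFinset_univ]
  rw [step2]
  have step3 : ∀ m, (∑ z : Ω m, g m z) = if h : m = ℓ then q m (h.symm ▸ xℓ) y else 1 := by
    intro m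
    by_cases h : m = ℓ
    · subst h
      simp only [hg, dif_pos rfl]
      simp
    · simp only [hg, dif_neg h]
      exact (hq m).2 y
  rw [Finset.prod_congr rfl fun m _ => step3 m]
  rw [Finset.prod_eq_single ℓ (fun m _ hm => by rw [dif_neg hm]) (by simp)]
  simp

/-- From observables `A ℓ ⪯ C` one builds, via the product kernel, a joint observable
`G = p ∗ C` of the `A ℓ` with `G ⪯ C`. -/
theorem product_kernel_joint {n : ℕ} {Ω : Fin n → Type*}
    [∀ ℓ, Fintype (Ω ℓ)] [∀ ℓ, DecidableEq (Ω ℓ)] {Ω' : Type*} [Fintype Ω']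
    (A : ∀ ℓ, Ω ℓ → H →L[ℂ] H) (C : Ω' → H →L[ℂ] H)
    (hA : ∀ ℓ, IsObservable (A ℓ)) (hC : IsObservable C)
    (q : ∀ ℓ, Ω ℓ → Ω' → ℝ) (hq : ∀ ℓ, IsMarkov (q ℓ))
    (hmarg : ∀ ℓ x, A ℓ x = ∑ y, (q ℓ x y : ℂ) • C y) :
    IsMarkov (fun (x : ∀ ℓ, Ω ℓ) (y : Ω') => ∏ ℓ, q ℓ (x ℓ) y) ∧
    IsJoint A (pproc (fun (x : ∀ ℓ, Ω ℓ) (y : Ω') => ∏ ℓ, q ℓ (x ℓ) y) C) ∧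
    PP (pproc (fun (x : ∀ ℓ, Ω ℓ) (y : Ω') => ∏ ℓ, q ℓ (x ℓ) y) C) C := by
  classical
  have hMarkov : IsMarkov (fun (x : ∀ ℓ, Ω ℓ) (y : Ω') => ∏ ℓ, q ℓ (x ℓ) y) := by
    constructor
    · intro x y
      exact Finset.prod_nonneg fun ℓ _ => (hq ℓ).1 (x ℓ) y
    · intro y
      show (∑ x : ∀ ℓ, Ω ℓ, ∏ ℓ, q ℓ (x ℓ) y) = 1
      rw [show (∑ x : ∀ ℓ, Ω ℓ, ∏ ℓ, q ℓ (x ℓ) y) = ∏ ℓ, ∑ z : Ω ℓ, q ℓ z y by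
        rw [Finset.prod_univ_sum, Fintype.piFinset_univ]]
      exact Finset.prod_eq_one fun ℓ _ => (hq ℓ).2 y
  refine ⟨hMarkov, ⟨pproc_isObservable hMarkov hC, ?_⟩, ⟨_, hMarkov, rfl⟩⟩
  intro ℓ xℓ
  have h1 : ∀ x : ∀ m, Ω m,
      (if x ℓ = xℓ then pproc (fun x y => ∏ m, q m (x m) y) C x else 0)
      = ∑ y, (if x ℓ = xℓ then ((∏ m, q m (x m) y : ℝ) : ℂ) else 0) • C y := by
    intro x
    by_cases h : x ℓ = xℓ <;> simp [pproc, h]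
  rw [Finset.sum_congr rfl fun x _ => h1 x, Finset.sum_comm]
  have h2 : ∀ y : Ω',
      (∑ x : ∀ m, Ω m, (if x ℓ = xℓ then ((∏ m, q m (x m) y : ℝ) : ℂ) else 0) • C y)
      = (q ℓ xℓ y : ℂ) • C y := by
    intro y
    rw [← Finset.sum_smul]
    congr 1
    rw [show (∑ x : ∀ m, Ω m, if x ℓ = xℓ then ((∏ m, q m (x m) y : ℝ) : ℂ) else 0)
        = ((∑ x : ∀ m, Ω m, if x ℓ = xℓ then (∏ m, q m (x m) y : ℝ) else 0 : ℝ) : ℂ) by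
      push_cast
      exact Finset.sum_congr rfl fun x _ => by split <;> simp]
    rw [prod_kernel_marginal q hq ℓ xℓ y]
  rw [Finset.sum_congr rfl fun y _ => h2 y]
  exact (hmarg ℓ xℓ).symm
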